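/- In a BGP instance there is no dispute wheel, even in the presence of a manipulator steadily announcing arbitrary fixed paths. Precisely, there do not exist a circular sequence of vertices u_0, …, u_n (indices taken modulo n+1) and valley-free paths P^{u_i} = R_i Q_i from u_i, where each R_i contains at least two vertices, each Q_i is the suffix of P^{u_i} beginning at vertex u_{i+1}, and each Q_i contains at least one edge, such that for every i either f^{u_i}(P^{u_i}) > f^{u_i}(Q_{i-1}), or f^{u_i}(P^{u_i}) = f^{u_i}(Q_{i-1}) and |P^{u_i}| ≤ |Q_{i-1}|. -/

import Mathlib

open scoped Classical

universe u

/-- A BGP instance: a graph whose edges are either directed customer-to-provider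
edges (`custProv u v` : `u` is a customer of its provider `v`) or undirected
peer-to-peer edges (`peer`), with no directed cycle (GR1), together with, for every
vertex, a strict total preference (ranking) relation on paths
(`pref v P₁ P₂` : `v` prefers `P₁` over `P₂`, written `P₁ <_λ^v P₂`). -/
structure BGP (V : Type u) where
  custProv : V → V → Prop
  peer : V → V → Prop
  peer_symm : ∀ {u v}, peer u v → peer v u
  peer_ne : ∀ {u v}, peer u v → u ≠ v
  /-- GR1 : no directed customer-provider cycles -/
  gr1 : ∀ v, ¬ Relation.TransGen custProv v v
  pref : V → List V → List V → Prop
  pref_irrefl : ∀ v p, ¬ pref v p p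
  pref_trans : ∀ v p q r, pref v p q → pref v q r → pref v p r
  pref_total : ∀ v p q, p ≠ q → pref v p q ∨ pref v q p

namespace BGP

variable {V : Type u} (G : BGP V)

/-- `u` and `v` are adjacent (there is a peering between them). -/
def Adj (u v : V) : Prop := G.custProv u v ∨ G.custProv v u ∨ G.peer u v

/-- Every step of the path (a path is a list of vertices, listed from its first
vertex to its last one) is a provider-to-customer step. -/
def DownPath : List V → Prop
  | u :: v :: rest => G.custProv v u ∧ DownPath (v :: rest)
  | _ => True

/-- A path is valley-free if provider-customer and peer-peer edges are only
followed by provider-customer edges. -/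
def ValleyFree : List V → Prop
  | u :: v :: rest =>
      (G.custProv u v ∧ ValleyFree (v :: rest)) ∨
      ((G.custProv v u ∨ G.peer u v) ∧ G.DownPath (v :: rest))
  | _ => True

/-- The class `f^v(P)` of a path leaving its first vertex `v`: `3`, `2` or `1`
according as the first edge goes to a customer, a peer, or a provider of `v`. -/
noncomputable def pathClass : List V → ℕ
  | u :: v :: _ => if G.custProv v u then 3 else if G.peer u v then 2 else 1
  | _ => 0

/-- The GR-EA conditions on rankings: paths of better class are preferred (GR3),
and among paths of the same class shorter ones are preferred; remaining ties are
broken by the fixed deterministic tie-break built into `pref`. -/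
def GREA : Prop :=
  (∀ v p q, p.head? = some v → q.head? = some v →
      G.pathClass q < G.pathClass p → G.pref v p q) ∧
  (∀ v p q, p.head? = some v → q.head? = some v →
      G.pathClass p = G.pathClass q → p.length < q.length → G.pref v p q)

/-- A routing state assigns to each vertex its selected path (possibly none). -/
abbrev State (V : Type u) := V → Option (List V)

/-- The set of paths available at `v` in state `σ`, where the manipulator `m`
steadily announces `attack u` to each of its neighbors `u` : an honest neighbor `u`
announces its selected path `p` to `v` when `(v u)p` is valley-free (GR2 with
export-all), the manipulator announces the (arbitrary) path `attack v`, and `v`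
discards any path containing `v` itself (loop detection). -/
def avail (m : V) (attack : V → Option (List V)) (σ : State V) (v : V) :
    Set (List V) :=
  { P | ∃ u p, G.Adj u v ∧ P = v :: p ∧ v ∉ p ∧ p.head? = some u ∧
      ((u ≠ m ∧ σ u = some p ∧ G.ValleyFree (v :: p)) ∨
       (u = m ∧ attack v = some p)) }

/-- `p` is the best path of `S` according to the ranking of `v`. -/
def IsBest (v : V) (S : Set (List V)) (p : List V) : Prop :=
  p ∈ S ∧ ∀ q ∈ S, q ≠ p → G.pref v p q

/-- The selected path (possibly none) is the best available one. -/
def BestChoice (v : V) (S : Set (List V)) : Option (List V) → Prop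
  | some p => G.IsBest v S p
  | none => S = ∅

/-- A routing state is stable (for destination `d`, manipulator `m` and steady
manipulator announcements `attack`) if `d` selects its trivial path and every
other vertex but `m` selects the best path available to it. -/
def Stable (d m : V) (attack : V → Option (List V)) (σ : State V) : Prop :=
  σ d = some [d] ∧
  ∀ v, v ≠ m → v ≠ d → G.BestChoice v (G.avail m attack σ v) (σ v)

/-- In state `σ`, the path `P` is disrupted at one of its vertices `v` (by the
path `P'` selected there). -/
def Disrupted (σ : State V) (P : List V) : Prop :=
  ∃ v s P', (v :: s) <:+ P ∧ σ v = some P' ∧ P' ≠ v :: s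

/-- In state `σ`, the path `P` is disrupted at one of its vertices by a path of
better class. -/
def DisruptedByBetterClass (σ : State V) (P : List V) : Prop :=
  ∃ v s P', (v :: s) <:+ P ∧ σ v = some P' ∧ P' ≠ v :: s ∧
    G.pathClass (v :: s) < G.pathClass P'

/-- Concatenation `PQ` of `P = (v_k … v_i)` and `Q = (v_i … v_0)` (they share the
vertex `v_i`). -/
def concatAt (P Q : List V) : List V := P.dropLast ++ Q

/-- The origin-spoofing attack in which `m` pretends to originate the prefix,
announcing the one-vertex path `(m)` exactly to the neighbors in `A`. -/
noncomputable def spoofAttack (m : V) (A : Set V) : V → Option (List V) :=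
  fun v => if v ∈ A then some [m] else none

/-- S-BGP cheating capability: `m` may announce to a neighbor only a path
`(m u)P` that it received from a neighbor `u` (here: in the stable state reached
when `m` behaves correctly, i.e. announces nothing). -/
def SBGPCompliant (d m : V) (attack : V → Option (List V)) : Prop :=
  ∃ σ0 : State V, G.Stable d m (fun _ => none) σ0 ∧
    ∀ v q, attack v = some q → G.Adj m v ∧ q ∈ G.avail m (fun _ => none) σ0 m

lemma downPath_infix (x y : V) :
    ∀ (l₁ : List V) {r : List V}, G.DownPath (l₁ ++ x :: y :: r) → G.custProv y x := by
  intro l₁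
  induction l₁ with
  | nil => intro r h; exact h.1
  | cons a t ih =>
    intro r h
    cases t with
    | nil => exact ih h.2
    | cons b t' => exact ih h.2

lemma vf_chain {x y : V} (hxy : ¬ G.custProv y x) :
    ∀ (l : List V) (a : V) {r : List V}, G.ValleyFree (a :: (l ++ x :: y :: r)) →
      Relation.TransGen G.custProv a x := by
  intro l
  induction l with
  | nil =>
    intro a r h
    rcases h with ⟨h1, _⟩ | ⟨_, hd⟩
    · exact Relation.TransGen.single h1
    · exact absurd hd.1 hxy
  | cons b t ih =>
    intro a r h
    rcases h with ⟨h1, h2⟩ | ⟨_, hd⟩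
    · exact (Relation.TransGen.single h1).trans (ih b h2)
    · exact absurd (G.downPath_infix x y (b :: t) hd) hxy

lemma pathClass_three {a b : V} {r : List V} (h : G.pathClass (a :: b :: r) = 3) :
    G.custProv b a := by
  by_contra hn
  simp only [BGP.pathClass, if_neg hn] at h
  split at h <;> omega

lemma pathClass_le_three (p : List V) : G.pathClass p ≤ 3 := by
  match p with
  | [] => simp [BGP.pathClass]
  | [a] => simp [BGP.pathClass]
  | a :: b :: r => simp only [BGP.pathClass]; split_ifs <;> omega

lemma class3_prop : ∀ (l : List V) (a : V) {x y : V} {r : List V},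
    G.ValleyFree (a :: (l ++ x :: y :: r)) →
    G.pathClass (a :: (l ++ x :: y :: r)) = 3 → G.custProv y x := by
  intro l a x y r hvf hc
  cases l with
  | nil =>
    have hxa : G.custProv x a := G.pathClass_three hc
    rcases hvf with ⟨hax, _⟩ | ⟨_, hd⟩
    · exact absurd ((Relation.TransGen.single hax).trans (Relation.TransGen.single hxa))
        (G.gr1 a)
    · exact hd.1
  | cons b t =>
    have hba : G.custProv b a := G.pathClass_three hc
    rcases hvf with ⟨hab, _⟩ | ⟨_, hd⟩
    · exact absurd ((Relation.TransGen.single hab).trans (Relation.TransGen.single hba))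
        (G.gr1 a)
    · exact G.downPath_infix x y (b :: t) hd

end BGP

/-- In a BGP instance there is no dispute wheel, even in the
presence of a manipulator steadily announcing arbitrary fixed paths: there do not
exist a circular sequence of vertices `u 0, …, u n` (indices modulo `n+1`) and
valley-free paths `P i = (R i)(Q i)` from `u i`, with `R i` containing at least two
vertices, `Q i` being the suffix of `P i` beginning at `u (i+1)` and containing at
least one edge, such that for every `i` either `f^{u i}(P i) > f^{u i}(Q (i-1))`,
or `f^{u i}(P i) = f^{u i}(Q (i-1))` and `|P i| ≤ |Q (i-1)|`. -/
theorem no_dispute_wheel {V : Type u} [Fintype V] (G : BGP V) (n : ℕ)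
    (u : Fin (n + 1) → V) (P R Q : Fin (n + 1) → List V)
    (hconcat : ∀ i, P i = BGP.concatAt (R i) (Q i))
    (hglue : ∀ i, (R i).getLast? = (Q i).head?)
    (hheadP : ∀ i, (P i).head? = some (u i))
    (hheadQ : ∀ i, (Q i).head? = some (u (i + 1)))
    (hR : ∀ i, 2 ≤ (R i).length)
    (hQ : ∀ i, 2 ≤ (Q i).length)
    (hvf : ∀ i, G.ValleyFree (P i))
    (hpref : ∀ i,
      G.pathClass (Q (i - 1)) < G.pathClass (P i) ∨
        (G.pathClass (P i) = G.pathClass (Q (i - 1)) ∧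
          (P i).length ≤ (Q (i - 1)).length)) :
    False := by
  -- decomposition of each P i
  have hdec : ∀ i, ∃ l y r, Q i = u (i + 1) :: y :: r ∧
      P i = u i :: (l ++ (u (i + 1) :: y :: r)) := by
    intro i
    obtain ⟨y, r, hq⟩ : ∃ y r, Q i = u (i + 1) :: y :: r := by
      have h2 := hQ i
      have hh := hheadQ i
      rcases hqe : Q i with _ | ⟨a, _ | ⟨b, t⟩⟩
      · rw [hqe] at h2; simp at h2
      · rw [hqe] at h2; simp at h2
      · rw [hqe] at hh
        simp only [List.head?] at hh
        exact ⟨b, t, by rw [← Option.some_inj.mp hh]⟩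
    obtain ⟨a, l, hr⟩ : ∃ a l, (R i).dropLast = a :: l := by
      rcases hre : (R i).dropLast with _ | ⟨a, l⟩
      · have h1 := hR i
        have := congrArg List.length hre
        simp [List.length_dropLast] at this
        omega
      · exact ⟨a, l, rfl⟩
    have hp : P i = a :: (l ++ Q i) := by
      rw [hconcat i, BGP.concatAt, hr]; simp
    have hau : a = u i := by
      have := hheadP i
      rw [hp] at this
      simpa using this
    exact ⟨l, y, r, hq, by rw [hp, hau, hq]⟩
  by_cases hcase : ∀ i, G.pathClass (Q i) ≠ 3
  · -- all classes below 3 : every R i is an all-up chain, getting a directed cycle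
    have hstep : ∀ i, Relation.TransGen G.custProv (u i) (u (i + 1)) := by
      intro i
      obtain ⟨l, y, r, hq, hp⟩ := hdec i
      have hxy : ¬ G.custProv y (u (i + 1)) := by
        intro hc
        exact hcase i (by rw [hq]; simp [BGP.pathClass, hc])
      have hvf' := hvf i
      rw [hp] at hvf'
      exact G.vf_chain hxy l (u i) hvf'
    open Fin.NatCast Fin.CommRing in
    have hloop : ∀ k : ℕ,
        Relation.TransGen G.custProv (u 0) (u ((k + 1 : ℕ) : Fin (n + 1))) := by
      intro k
      induction k with
      | zero => simpa using hstep 0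
      | succ k ih =>
        have h2 := hstep ((k + 1 : ℕ) : Fin (n + 1))
        have he : (((k + 1 : ℕ) : Fin (n + 1)) + 1) = ((k + 1 + 1 : ℕ) : Fin (n + 1)) := by
          push_cast; ring
        rw [he] at h2
        exact ih.trans h2
    have hfin := hloop n
    rw [Fin.natCast_self (n + 1)] at hfin
    exact (G.gr1 (u 0)) hfin
  · -- some class equals 3 : it propagates, and lengths strictly decrease around the wheel
    push_neg at hcase
    obtain ⟨j, hj⟩ := hcase
    open Fin.NatCast Fin.CommRing in
    have step : ∀ i, G.pathClass (Q i) = 3 → G.pathClass (Q (i + 1)) = 3 := by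
      intro i hi
      have h := hpref (i + 1)
      have he : (i + 1 : Fin (n + 1)) - 1 = i := by ring
      rw [he] at h
      have hc : G.pathClass (P (i + 1)) = 3 := by
        rcases h with h | ⟨h, _⟩
        · have := G.pathClass_le_three (P (i + 1)); omega
        · rw [h, hi]
      obtain ⟨l, y, r, hq, hp⟩ := hdec (i + 1)
      rw [hp] at hc
      have hvf' := hvf (i + 1); rw [hp] at hvf'
      have h3 := G.class3_prop l (u (i + 1)) hvf' hc
      rw [hq]; simp [BGP.pathClass, h3]
    open Fin.NatCast Fin.CommRing in
    have hall : ∀ i, G.pathClass (Q i) = 3 := by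
      have hk : ∀ k : ℕ, G.pathClass (Q (j + (k : Fin (n + 1)))) = 3 := by
        intro k
        induction k with
        | zero => simpa using hj
        | succ k ih =>
          have h2 := step (j + (k : Fin (n + 1))) ih
          have he : (j + ((k : ℕ) : Fin (n + 1)) + 1) = j + ((k + 1 : ℕ) : Fin (n + 1)) := by
            push_cast; ring
          rwa [he] at h2
      intro i
      have h2 := hk (i - j).val
      rw [Fin.cast_val_eq_self] at h2
      have he : j + (i - j) = i := by ring
      rwa [he] at h2
    have hlen : ∀ i, (Q i).length < (Q (i - 1)).length := by
      intro i
      have h := hpref i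
      have h3 := hall (i - 1)
      have hle := G.pathClass_le_three (P i)
      have hPl : (P i).length ≤ (Q (i - 1)).length := by
        rcases h with h | ⟨_, h⟩
        · omega
        · exact h
      have hQP : (Q i).length < (P i).length := by
        rw [hconcat i, BGP.concatAt]
        have h1 : 1 ≤ (R i).dropLast.length := by
          have := hR i; rw [List.length_dropLast]; omega
        rw [List.length_append]; omega
      omega
    obtain ⟨i₀, hi₀⟩ := Finite.exists_min (fun i => (Q i).length)
    have hlt := hlen (i₀ + 1)
    open Fin.NatCast Fin.CommRing in
    have he : (i₀ + 1 : Fin (n + 1)) - 1 = i₀ := by ring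
    rw [he] at hlt
    exact absurd (hi₀ (i₀ + 1)) (by simpa using Nat.not_le.mpr hlt)
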